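/- If n ≥ 1, d > 0 is real, and X, Y ∈ ℂⁿ satisfy φ_n(X,Y) = d², then there exists an affine map I : ℂⁿ → ℂⁿ with orthogonal linear part such that I((0,0,...,0)) = X and I((d,0,...,0)) = Y. -/

import Mathlib

/-- φ_n(X,Y) = Σ_{i=1}^n (x_i − y_i)². -/
noncomputable def phi (n : ℕ) (X Y : Fin n → ℂ) : ℂ := ∑ i, (X i - Y i) ^ 2

/-- Reflection (times a sign ε) across the hyperplane orthogonal to `w`
with respect to the bilinear form `∑ x i * y i`. -/
noncomputable def reflMap (n : ℕ) (w : Fin n → ℂ) (ε : ℂ) :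
    (Fin n → ℂ) →ₗ[ℂ] (Fin n → ℂ) where
  toFun x := fun i => ε * (x i - (2 * (∑ j, x j * w j) / (∑ j, w j * w j)) * w i)
  map_add' x y := by
    funext i
    simp only [Pi.add_apply, add_mul, Finset.sum_add_distrib]
    ring
  map_smul' c x := by
    funext i
    simp only [Pi.smul_apply, smul_eq_mul, RingHom.id_apply]
    rw [show (∑ j, c * x j * w j) = c * ∑ j, x j * w j by
      rw [Finset.mul_sum]; exact Finset.sum_congr rfl fun j _ => by ring]
    ring

lemma refl_q (n : ℕ) (w : Fin n → ℂ) (hw : (∑ j, w j * w j) ≠ 0) (x : Fin n → ℂ) :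
    ∑ i, (x i - (2 * (∑ j, x j * w j) / (∑ j, w j * w j)) * w i) ^ 2
      = ∑ i, (x i) ^ 2 := by
  set B : ℂ := ∑ j, x j * w j with hB
  set Q : ℂ := ∑ j, w j * w j with hQ
  set c : ℂ := 2 * B / Q with hc
  have expand : ∑ i, (x i - c * w i) ^ 2
      = ∑ i, (x i) ^ 2 - 2 * c * B + c ^ 2 * Q := by
    rw [show (∑ i, (x i - c * w i) ^ 2)
        = ∑ i, ((x i) ^ 2 - 2 * c * (x i * w i) + c ^ 2 * (w i * w i)) from
      Finset.sum_congr rfl fun i _ => by ring]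
    rw [Finset.sum_add_distrib, Finset.sum_sub_distrib, ← Finset.mul_sum, ← Finset.mul_sum,
      ← hB, ← hQ]
  rw [expand, hc]
  field_simp
  ring

lemma refl_preserves (n : ℕ) (w : Fin n → ℂ) (hw : (∑ j, w j * w j) ≠ 0)
    (ε : ℂ) (hε : ε ^ 2 = 1) (P Q : Fin n → ℂ) :
    phi n (reflMap n w ε P) (reflMap n w ε Q) = phi n P Q := by
  unfold phi
  have h1 : ∀ i, reflMap n w ε P i - reflMap n w ε Q i = reflMap n w ε (P - Q) i := by
    intro i
    rw [map_sub]
    simp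
  calc ∑ i, (reflMap n w ε P i - reflMap n w ε Q i) ^ 2
      = ∑ i, (reflMap n w ε (P - Q) i) ^ 2 :=
        Finset.sum_congr rfl fun i _ => by rw [h1]
    _ = ∑ i, ((P - Q) i - (2 * (∑ j, (P - Q) j * w j) / (∑ j, w j * w j)) * w i) ^ 2 := by
        refine Finset.sum_congr rfl fun i _ => ?_
        show (ε * _) ^ 2 = _
        rw [mul_pow, hε, one_mul]
    _ = ∑ i, ((P - Q) i) ^ 2 := refl_q n w hw _
    _ = ∑ i, (P i - Q i) ^ 2 := by simp

lemma sum_ind (n : ℕ) (hn : 1 ≤ n) (f : Fin n → ℂ) :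
    ∑ i : Fin n, (if (i : ℕ) = 0 then (1 : ℂ) else 0) * f i = f ⟨0, hn⟩ := by
  rw [Finset.sum_eq_single (⟨0, hn⟩ : Fin n)]
  · simp
  · intro b _ hb
    have : (b : ℕ) ≠ 0 := fun h => hb (Fin.ext h)
    simp [this]
  · simp

/-- Given a reflection carrying e₀ to v, build the desired affine map. -/
lemma build (n : ℕ) (d : ℝ) (hd0 : (d : ℂ) ≠ 0) (X Y v w : Fin n → ℂ)
    (hw : (∑ j, w j * w j) ≠ 0) (ε : ℂ) (hε : ε ^ 2 = 1)
    (hv : ∀ i, X i + d * v i = Y i)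
    (he : ∀ i, reflMap n w ε (fun j => if (j : ℕ) = 0 then (1 : ℂ) else 0) i = v i) :
    ∃ I : (Fin n → ℂ) →ᵃ[ℂ] (Fin n → ℂ),
      (∀ P Q : Fin n → ℂ, phi n (I P) (I Q) = phi n P Q) ∧
      I (fun _ => 0) = X ∧
      I (fun i => if (i : ℕ) = 0 then (d : ℂ) else 0) = Y := by
  set L := reflMap n w ε with hL
  refine ⟨L.toAffineMap + AffineMap.const ℂ (Fin n → ℂ) X, ?_, ?_, ?_⟩
  · intro P Q
    have happ : ∀ R : Fin n → ℂ,
        (L.toAffineMap + AffineMap.const ℂ (Fin n → ℂ) X) R = L R + X := by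
      intro R; rfl
    rw [happ, happ]
    have : phi n (L P + X) (L Q + X) = phi n (L P) (L Q) := by
      unfold phi
      exact Finset.sum_congr rfl fun i _ => by simp only [Pi.add_apply]; ring
    rw [this]
    exact refl_preserves n w hw ε hε P Q
  · show L (fun _ => 0) + X = X
    have : (fun _ : Fin n => (0 : ℂ)) = (0 : Fin n → ℂ) := rfl
    rw [this, map_zero, zero_add]
  · show L (fun i => if (i : ℕ) = 0 then (d : ℂ) else 0) + X = Y
    have hde : (fun i : Fin n => if (i : ℕ) = 0 then (d : ℂ) else 0)
        = (d : ℂ) • (fun j : Fin n => if (j : ℕ) = 0 then (1 : ℂ) else 0) := by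
      funext i
      simp only [Pi.smul_apply, smul_eq_mul]
      split <;> simp
    rw [hde, map_smul]
    funext i
    simp only [Pi.add_apply, Pi.smul_apply, smul_eq_mul, he i]
    rw [add_comm]
    exact hv i

theorem stmt_14 (n : ℕ) (hn : 1 ≤ n) (d : ℝ) (hd : 0 < d)
    (X Y : Fin n → ℂ) (hXY : phi n X Y = (d : ℂ) ^ 2) :
    ∃ I : (Fin n → ℂ) →ᵃ[ℂ] (Fin n → ℂ),
      (∀ P Q : Fin n → ℂ, phi n (I P) (I Q) = phi n P Q) ∧
      I (fun _ => 0) = X ∧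
      I (fun i => if (i : ℕ) = 0 then (d : ℂ) else 0) = Y := by
  have hd0 : (d : ℂ) ≠ 0 := Complex.ofReal_ne_zero.mpr hd.ne'
  set v : Fin n → ℂ := fun i => (Y i - X i) / d with hvdef
  set e0 : Fin n → ℂ := fun j => if (j : ℕ) = 0 then (1 : ℂ) else 0 with he0def
  have hv : ∀ i, X i + d * v i = Y i := by
    intro i
    rw [hvdef]
    field_simp
    ring
  have hqv : ∑ i, v i * v i = 1 := by
    have h1 : ∀ i, v i * v i = (X i - Y i) ^ 2 * ((d : ℂ) ^ 2)⁻¹ := by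
      intro i
      rw [hvdef]
      field_simp
      ring
    rw [Finset.sum_congr rfl fun i _ => h1 i, ← Finset.sum_mul]
    have : (∑ i, (X i - Y i) ^ 2) = (d : ℂ) ^ 2 := hXY
    rw [this]
    field_simp
  set v0 : ℂ := v ⟨0, hn⟩ with hv0def
  have he00 : e0 ⟨0, hn⟩ = 1 := by rw [he0def]; simp
  -- key quadratic expansion
  have key : ∀ s : ℂ, ∑ j, (v j + s * e0 j) * (v j + s * e0 j)
      = 1 + 2 * s * v0 + s ^ 2 := by
    intro s
    have h1 : ∀ j, (v j + s * e0 j) * (v j + s * e0 j)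
        = v j * v j + ((2 * s) * (e0 j * v j) + s ^ 2 * (e0 j * e0 j)) := by
      intro j; ring
    rw [Finset.sum_congr rfl fun j _ => h1 j, Finset.sum_add_distrib,
      Finset.sum_add_distrib, ← Finset.mul_sum, ← Finset.mul_sum,
      sum_ind n hn v, sum_ind n hn e0, hqv, he00, ← hv0def]
    ring
  have hBe0 : ∀ s : ℂ, ∑ j, e0 j * (v j + s * e0 j) = v0 + s := by
    intro s
    rw [sum_ind n hn]
    simp [he00, ← hv0def]
  by_cases hc : v0 = 1
  · -- use w = v + e0, ε = -1
    set w : Fin n → ℂ := fun j => v j + 1 * e0 j with hwdef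
    have hqw : ∑ j, w j * w j = 4 := by
      rw [hwdef]; rw [key 1, hc]; ring
    have hw : (∑ j, w j * w j) ≠ 0 := by rw [hqw]; norm_num
    refine build n d hd0 X Y v w hw (-1) (by ring) hv ?_
    intro i
    show (-1 : ℂ) * (e0 i - (2 * (∑ j, e0 j * w j) / (∑ j, w j * w j)) * w i) = v i
    have h2 : ∑ j, e0 j * w j = 2 := by
      rw [hwdef, hBe0 1, hc]; ring
    rw [h2, hqw, hwdef]
    norm_num
  · -- use w = v - e0, ε = 1
    set w : Fin n → ℂ := fun j => v j + (-1) * e0 j with hwdef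
    have hqw : ∑ j, w j * w j = 2 - 2 * v0 := by
      rw [hwdef, key (-1)]; ring
    have hw : (∑ j, w j * w j) ≠ 0 := by
      rw [hqw]
      intro h
      exact hc (by linear_combination -h / 2)
    refine build n d hd0 X Y v w hw 1 (by ring) hv ?_
    intro i
    show (1 : ℂ) * (e0 i - (2 * (∑ j, e0 j * w j) / (∑ j, w j * w j)) * w i) = v i
    have h2 : ∑ j, e0 j * w j = v0 - 1 := by
      rw [hwdef, hBe0 (-1)]; ring
    have hcc : 2 * (v0 - 1) / (2 - 2 * v0) = -1 := by
      rw [div_eq_iff (by rw [← hqw]; exact hw)]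
      ring
    rw [h2, hqw, hcc, hwdef]
    ring
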